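/- Let E be an elliptic curve over a finite field k, P ∈ E(k) fixed, and X, Y finite subsets of E(k) not containing P and meeting in exactly one point. Then L_0((X ∪ Y)) = L_0((X)) ⊕ L_0((Y)), where L_0(D) = { f ∈ L(D) : f(P) = 0 }. -/

import Mathlib

open scoped Classical

/-- The effective divisor `(Z) = Σ_{z ∈ Z} z` attached to a finite set `Z` of points. -/
noncomputable def setDiv {pt : Type} (Z : Finset pt) : pt →₀ ℤ :=
  ∑ z ∈ Z, Finsupp.single z 1

lemma setDiv_apply {pt : Type} (Z : Finset pt) (w : pt) :
    setDiv Z w = if w ∈ Z then 1 else 0 := by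
  classical
  simp [setDiv, Finsupp.finset_sum_apply, Finsupp.single_apply]

lemma setDiv_nonneg {pt : Type} (Z : Finset pt) : 0 ≤ setDiv Z := by
  rw [Finsupp.le_def]
  intro w
  rw [setDiv_apply]
  split <;> simp

lemma setDiv_mono {pt : Type} {Z W : Finset pt} (h : Z ⊆ W) : setDiv Z ≤ setDiv W := by
  rw [Finsupp.le_def]
  intro w
  rw [setDiv_apply, setDiv_apply]
  by_cases hw : w ∈ Z
  · simp [hw, h hw]
  · simp [hw]; split <;> simp

lemma setDiv_ne_zero {pt : Type} {Z : Finset pt} {q : pt} (h : q ∈ Z) : setDiv Z ≠ 0 := by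
  intro h0
  have := setDiv_apply Z q
  rw [h0] at this
  simp [h] at this

lemma setDiv_sum {pt : Type} (Z : Finset pt) :
    ((setDiv Z).sum fun _ n => n) = (Z.card : ℤ) := by
  classical
  have hsupp : (setDiv Z).support ⊆ Z := by
    intro w hw
    by_contra h
    exact (Finsupp.mem_support_iff.mp hw) (by rw [setDiv_apply]; simp [h])
  rw [Finsupp.sum_of_support_subset _ hsupp _ (by simp)]
  rw [Finset.sum_congr rfl (fun w hw => by rw [setDiv_apply, if_pos hw])]
  simp


/-- Model of an elliptic curve `E` over a finite field `k` as in
Statements 4–5.  Fix a point `P` and finite subsets `X, Y` of points, not containing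
`P`, meeting in exactly one point `Q`.  Since `P ∉ X ∪ Y`, functions in
`L((X ∪ Y))` are regular at `P`; `ev` is the `k`-linear evaluation-at-`P` functional on
`L((X ∪ Y))` (it sends the constant `c` to `c`).  With
`L_0(D) = {f ∈ L(D) : f(P) = 0}`, we have the internal direct sum decomposition
`L_0((X ∪ Y)) = L_0((X)) ⊕ L_0((Y))`. -/
theorem stmt6 {k K pt : Type} [Field k] [Fintype k] [Field K] [Algebra k K]
    (dv : Kˣ → (pt →₀ ℤ))
    (L : (pt →₀ ℤ) → Submodule k K)
    (hL : ∀ (D : pt →₀ ℤ) (f : K),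
      f ∈ L D ↔ f = 0 ∨ ∃ u : Kˣ, (u : K) = f ∧ 0 ≤ dv u + D)
    (hRR : ∀ D : pt →₀ ℤ, 0 ≤ D → D ≠ 0 →
      Module.finrank k (L D) = (D.sum fun _ n => n).toNat)
    (hL0 : ∀ f ∈ L 0, ∃ c : k, algebraMap k K c = f)
    (hconst : ∀ c : k, algebraMap k K c ∈ L 0)
    (hmono : ∀ D D' : pt →₀ ℤ, D ≤ D' → L D ≤ L D')
    (P : pt) (X Y : Finset pt) (Q : pt)
    (hPXY : P ∉ X ∪ Y) (hXY : X ∩ Y = {Q})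
    (ev : (L (setDiv (X ∪ Y))) →ₗ[k] k)
    (hev : ∀ (f : L (setDiv (X ∪ Y))) (c : k),
      (f : K) = algebraMap k K c → ev f = c) :
    ((LinearMap.ker ev ⊓
        Submodule.comap (L (setDiv (X ∪ Y))).subtype (L (setDiv X))) ⊓
      (LinearMap.ker ev ⊓
        Submodule.comap (L (setDiv (X ∪ Y))).subtype (L (setDiv Y))) = ⊥) ∧
    ((LinearMap.ker ev ⊓
        Submodule.comap (L (setDiv (X ∪ Y))).subtype (L (setDiv X))) ⊔
      (LinearMap.ker ev ⊓
        Submodule.comap (L (setDiv (X ∪ Y))).subtype (L (setDiv Y)))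
      = LinearMap.ker ev) := by
  classical
  have hQXY : Q ∈ X ∩ Y := by rw [hXY]; exact Finset.mem_singleton_self Q
  have hQX : Q ∈ X := (Finset.mem_inter.mp hQXY).1
  have hQY : Q ∈ Y := (Finset.mem_inter.mp hQXY).2
  have hconstmem : ∀ (c : k) (D : pt →₀ ℤ), 0 ≤ D → algebraMap k K c ∈ L D :=
    fun c D hD => hmono 0 D hD (hconst c)
  -- finrank of L((Z))
  have hfr : ∀ Z : Finset pt, Q ∈ Z → Module.finrank k (L (setDiv Z)) = Z.card := by
    intro Z hQ
    rw [hRR _ (setDiv_nonneg Z) (setDiv_ne_zero hQ), setDiv_sum]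
    simp
  haveI : FiniteDimensional k (L (setDiv (X ∪ Y))) := by
    apply FiniteDimensional.of_finrank_pos
    rw [hfr (X ∪ Y) (Finset.mem_union_left _ hQX)]
    exact Finset.card_pos.mpr ⟨Q, Finset.mem_union_left _ hQX⟩
  -- finrank of L_0((Z)) inside L((X ∪ Y))
  have key : ∀ Z : Finset pt, Q ∈ Z → Z ⊆ X ∪ Y →
      Module.finrank k ((LinearMap.ker ev ⊓
        Submodule.comap (L (setDiv (X ∪ Y))).subtype (L (setDiv Z)) :
          Submodule k (L (setDiv (X ∪ Y))))) = Z.card - 1 := by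
    intro Z hQ hZ
    have hle : L (setDiv Z) ≤ L (setDiv (X ∪ Y)) := hmono _ _ (setDiv_mono hZ)
    set A' : Submodule k (L (setDiv (X ∪ Y))) :=
      Submodule.comap (L (setDiv (X ∪ Y))).subtype (L (setDiv Z)) with hA'
    have hfrA' : Module.finrank k A' = Z.card := by
      rw [(Submodule.comapSubtypeEquivOfLe hle).finrank_eq]
      exact hfr Z hQ
    set g : A' →ₗ[k] k := ev ∘ₗ A'.subtype with hg
    have hc1 : (⟨algebraMap k K 1, hconstmem 1 _ (setDiv_nonneg _)⟩ :
        L (setDiv (X ∪ Y))) ∈ A' := by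
      rw [hA', Submodule.mem_comap]
      exact hconstmem 1 _ (setDiv_nonneg Z)
    have hsurj : Function.Surjective g := by
      intro c
      refine ⟨c • ⟨_, hc1⟩, ?_⟩
      have h1 : g ⟨_, hc1⟩ = 1 := hev _ 1 rfl
      rw [map_smul, h1, smul_eq_mul, mul_one]
    have hrn := LinearMap.finrank_range_add_finrank_ker (K := k) (V := A') (V₂ := k) g
    rw [LinearMap.range_eq_top.mpr hsurj, finrank_top, Module.finrank_self] at hrn
    have hmap : Submodule.map A'.subtype (LinearMap.ker g) = LinearMap.ker ev ⊓ A' := by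
      rw [hg, LinearMap.ker_comp, Submodule.map_comap_subtype, inf_comm]
    calc Module.finrank k (LinearMap.ker ev ⊓ A' : Submodule k (L (setDiv (X ∪ Y))))
        = Module.finrank k (Submodule.map A'.subtype (LinearMap.ker g)) := by rw [hmap]
      _ = Module.finrank k (LinearMap.ker g) := Submodule.finrank_map_subtype_eq A' _
      _ = Z.card - 1 := by omega
  -- L((Q)) consists of constants
  have hQnonneg : (0 : pt →₀ ℤ) ≤ Finsupp.single Q 1 := by
    rw [Finsupp.le_def]
    intro w
    rw [Finsupp.single_apply]
    split <;> simp
  have hsing : L (Finsupp.single Q 1) = LinearMap.range (Algebra.linearMap k K) := by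
    have hle : LinearMap.range (Algebra.linearMap k K) ≤ L (Finsupp.single Q 1) := by
      rintro _ ⟨c, rfl⟩
      exact hconstmem c _ hQnonneg
    have hone : Module.finrank k (L (Finsupp.single Q 1)) = 1 := by
      rw [hRR _ hQnonneg (by
        intro h0
        have := congrArg (fun D : pt →₀ ℤ => D Q) h0
        simp at this)]
      rw [Finsupp.sum_single_index rfl]
      rfl
    haveI : FiniteDimensional k (L (Finsupp.single Q 1)) :=
      FiniteDimensional.of_finrank_pos (by rw [hone]; norm_num)
    symm
    apply Submodule.eq_of_le_of_finrank_le hle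
    rw [hone, LinearMap.finrank_range_of_inj, Module.finrank_self]
    exact (algebraMap k K).injective
  -- Part 1: trivial intersection
  have hbot : (LinearMap.ker ev ⊓
        Submodule.comap (L (setDiv (X ∪ Y))).subtype (L (setDiv X))) ⊓
      (LinearMap.ker ev ⊓
        Submodule.comap (L (setDiv (X ∪ Y))).subtype (L (setDiv Y))) = ⊥ := by
    rw [eq_bot_iff]
    intro x hx
    simp only [Submodule.mem_inf, LinearMap.mem_ker, Submodule.mem_comap] at hx
    obtain ⟨⟨hk, hxX⟩, -, hxY⟩ := hx
    have hmem : (x : K) ∈ L (Finsupp.single Q 1) := by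
      rcases (hL _ _).mp hxX with h0 | ⟨u, hu, hux⟩
      · exact (hL _ _).mpr (Or.inl h0)
      rcases (hL _ _).mp hxY with h0 | ⟨v, hv, hvy⟩
      · exact (hL _ _).mpr (Or.inl h0)
      have huv : u = v := Units.ext (by rw [hu, hv])
      subst huv
      refine (hL _ _).mpr (Or.inr ⟨u, hu, ?_⟩)
      rw [Finsupp.le_def] at hux hvy ⊢
      intro w
      have hX := hux w
      have hY := hvy w
      simp only [Finsupp.add_apply, Finsupp.coe_zero, Pi.zero_apply, setDiv_apply] at hX hY ⊢
      rw [Finsupp.single_apply]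
      by_cases hwQ : Q = w
      · subst hwQ
        rw [if_pos rfl]
        rw [if_pos hQX] at hX
        omega
      · rw [if_neg hwQ]
        have hnot : w ∉ X ∨ w ∉ Y := by
          by_contra h
          push_neg at h
          have hw : w ∈ X ∩ Y := Finset.mem_inter.mpr ⟨h.1, h.2⟩
          rw [hXY, Finset.mem_singleton] at hw
          exact hwQ hw.symm
        rcases hnot with h | h
        · rw [if_neg h] at hX; omega
        · rw [if_neg h] at hY; omega
    rw [hsing] at hmem
    obtain ⟨c, hc⟩ := hmem
    have hevc : ev x = c := hev x c hc.symm
    have hc0 : c = 0 := by rw [← hevc, hk]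
    have : (x : K) = 0 := by rw [← hc, hc0, map_zero]
    simpa [Submodule.mem_bot] using Subtype.ext this
  refine ⟨hbot, ?_⟩
  -- Part 2: sup equals ker ev, by dimension count
  have htop : Submodule.comap (L (setDiv (X ∪ Y))).subtype (L (setDiv (X ∪ Y))) = ⊤ := by
    rw [eq_top_iff]
    intro x _
    exact x.2
  have hker := key (X ∪ Y) (Finset.mem_union_left _ hQX) (subset_refl _)
  rw [htop, inf_top_eq] at hker
  have hA := key X hQX Finset.subset_union_left
  have hB := key Y hQY Finset.subset_union_right
  have hsum := Submodule.finrank_sup_add_finrank_inf_eq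
    (LinearMap.ker ev ⊓ Submodule.comap (L (setDiv (X ∪ Y))).subtype (L (setDiv X)))
    (LinearMap.ker ev ⊓ Submodule.comap (L (setDiv (X ∪ Y))).subtype (L (setDiv Y)))
  rw [hbot, finrank_bot] at hsum
  have hcard : X.card + Y.card = (X ∪ Y).card + 1 := by
    have h := Finset.card_union_add_card_inter X Y
    rw [hXY, Finset.card_singleton] at h
    omega
  have hXpos : 0 < X.card := Finset.card_pos.mpr ⟨Q, hQX⟩
  have hYpos : 0 < Y.card := Finset.card_pos.mpr ⟨Q, hQY⟩
  apply Submodule.eq_of_le_of_finrank_le (sup_le inf_le_left inf_le_left)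
  rw [hker]
  omega
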